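/- For the interleaved Reed-Solomon code of length N, dimension K over F_q with L interleaved codewords, under the uniform random error model where the t nonzero error columns are uniform over nonzero vectors of F_q^L, the probability of undetected error of any decoder with the maximum-likelihood certificate property tends to 0 as q^L → ∞, for every t ≤ N - K - 1. -/

import Mathlib

open Polynomial

lemma my_poly_eq {F : Type} [Field F] {N K : ℕ} {α : Fin N → F}
    (hα : Function.Injective α) {p q : F[X]} (hp : p.degree < (K : ℕ))
    (hq : q.degree < (K : ℕ)) (V : Finset (Fin N)) (hV : K ≤ V.card)
    (h : ∀ i ∈ V, p.eval (α i) = q.eval (α i)) : p = q := by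
  classical
  by_cases hpq : p - q = 0
  · exact sub_eq_zero.mp hpq
  · exfalso
    apply hpq
    apply Polynomial.eq_zero_of_natDegree_lt_card_of_eval_eq_zero' (p - q) (V.image α)
    · intro x hx
      obtain ⟨i, hi, rfl⟩ := Finset.mem_image.mp hx
      simp [h i hi, sub_eq_zero]
    · rw [Finset.card_image_of_injective _ hα]
      have h1 : (p - q).degree < (K : ℕ) :=
        lt_of_le_of_lt (degree_sub_le p q) (max_lt hp hq)
      have := (Polynomial.natDegree_lt_iff_degree_lt hpq).mpr h1
      omega

lemma my_ncard_cover {A B : Type} [Finite A] (s : Set A) (I : Finset B)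
    (f : B → Set A) (h : s ⊆ ⋃ i ∈ I, f i) :
    s.ncard ≤ ∑ i ∈ I, (f i).ncard := by
  classical
  induction I using Finset.induction generalizing s with
  | empty => simp at h; simp [h]
  | insert _ _ hx ih =>
    rename_i a I'
    rw [Finset.sum_insert hx]
    have hs : s ⊆ (s ∩ f a) ∪ (s \ f a) := by
      intro x hxs
      by_cases hxa : x ∈ f a
      · exact Or.inl ⟨hxs, hxa⟩
      · exact Or.inr ⟨hxs, hxa⟩
    calc s.ncard ≤ ((s ∩ f a) ∪ (s \ f a)).ncard := Set.ncard_le_ncard hs (Set.toFinite _)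
      _ ≤ (s ∩ f a).ncard + (s \ f a).ncard := Set.ncard_union_le _ _
      _ ≤ (f a).ncard + ∑ i ∈ I', (f i).ncard := by
          apply Nat.add_le_add
          · exact Set.ncard_le_ncard Set.inter_subset_right (Set.toFinite _)
          · apply ih
            intro x hxd
            have := h hxd.1
            simp only [Finset.mem_insert, Set.mem_iUnion] at this ⊢
            obtain ⟨i, hi, hfi⟩ := this
            rcases hi with rfl | hi
            · exact absurd hfi hxd.2
            · exact ⟨i, hi, hfi⟩

lemma my_ncard_prod_univ {A B : Type} [Fintype B] (s : Set A) :
    (s ×ˢ (Set.univ : Set B)).ncard = s.ncard * Fintype.card B := by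
  rw [← Nat.card_coe_set_eq, Nat.card_congr (Equiv.Set.prod s Set.univ), Nat.card_prod,
    Nat.card_coe_set_eq, Nat.card_congr (Equiv.Set.univ B), Nat.card_eq_fintype_card]

lemma my_cs_count {F : Type} [Field F] [Fintype F] {N K L : ℕ} {α : Fin N → F}
    (hα : Function.Injective α) (hKN : K ≤ N) (U : Finset (Fin N)) :
    {C : Matrix (Fin L) (Fin N) F |
        (∀ l, ∃ p : F[X], p.degree < (K : ℕ) ∧ ∀ i, C l i = p.eval (α i)) ∧
        ∀ i ∉ U, ∀ l, C l i = 0}.ncard ≤ (Fintype.card F) ^ (L * (U.card - (N - K))) := by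
  classical
  obtain ⟨W, hWU, hW⟩ := Finset.exists_subset_card_eq (s := U) (n := U.card - (N - K)) (by omega)
  have hinj : Set.InjOn (fun (C : Matrix (Fin L) (Fin N) F) => fun (l : Fin L) (w : W) => C l w)
      {C : Matrix (Fin L) (Fin N) F |
        (∀ l, ∃ p : F[X], p.degree < (K : ℕ) ∧ ∀ i, C l i = p.eval (α i)) ∧
        ∀ i ∉ U, ∀ l, C l i = 0} := by
    intro C1 h1 C2 h2 hf
    ext l i
    obtain ⟨p1, hp1, he1⟩ := h1.1 l
    obtain ⟨p2, hp2, he2⟩ := h2.1 l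
    have hU : U.card ≤ N := by
      simpa using Finset.card_le_univ U
    have hp : p1 = p2 := by
      apply my_poly_eq hα hp1 hp2 (Uᶜ ∪ W)
      · have hdisj : Disjoint Uᶜ W := by
          exact disjoint_compl_left_iff.mpr (Finset.le_iff_subset.mpr hWU)
        rw [Finset.card_union_of_disjoint hdisj, Finset.card_compl, Fintype.card_fin, hW]
        omega
      · intro i hi
        rcases Finset.mem_union.mp hi with hi | hi
        · rw [← he1, ← he2, h1.2 i (Finset.mem_compl.mp hi) l, h2.2 i (Finset.mem_compl.mp hi) l]
        · rw [← he1, ← he2]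
          exact congrFun (congrFun hf l) ⟨i, hi⟩
    rw [he1, he2, hp]
  calc _ ≤ (Set.univ : Set (Fin L → W → F)).ncard :=
        Set.ncard_le_ncard_of_injOn _ (fun a _ => Set.mem_univ _) hinj (Set.toFinite _)
    _ = Fintype.card (Fin L → W → F) := by
        rw [Set.ncard_univ, Nat.card_eq_fintype_card]
    _ = (Fintype.card F) ^ (L * (U.card - (N - K))) := by
        rw [Fintype.card_fun, Fintype.card_fun, Fintype.card_coe, Fintype.card_fin, hW,
          ← pow_mul, mul_comm]

lemma my_cw_eq_zero {F : Type} [Field F] {N K L : ℕ} {α : Fin N → F}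
    (hα : Function.Injective α) (hKN : K ≤ N) (U : Finset (Fin N))
    (C : Matrix (Fin L) (Fin N) F)
    (hC : ∀ l, ∃ p : F[X], p.degree < (K : ℕ) ∧ ∀ i, C l i = p.eval (α i))
    (h0 : ∀ i ∉ U, ∀ l, C l i = 0) (hcard : U.card ≤ N - K) : C = 0 := by
  classical
  ext l i
  obtain ⟨p, hp, he⟩ := hC l
  have hU : U.card ≤ N := by simpa using Finset.card_le_univ U
  have hzero : p = 0 := by
    apply my_poly_eq hα hp (by rw [Polynomial.degree_zero]; exact WithBot.bot_lt_coe K :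
      (0 : F[X]).degree < (K : ℕ)) Uᶜ
    · rw [Finset.card_compl, Fintype.card_fin]
      omega
    · intro j hj
      rw [← he, h0 j (Finset.mem_compl.mp hj) l, eval_zero]
  simp [he, hzero]

lemma my_bad_count {F : Type} [Field F] [Fintype F] {N K L t : ℕ}
    (hKN : K < N) (ht : t ≤ N - K - 1) {α : Fin N → F} (hα : Function.Injective α)
    (D : Matrix (Fin L) (Fin N) F)
    (hD : ∀ l, ∃ p : F[X], p.degree < (K : ℕ) ∧ ∀ i, D l i = p.eval (α i)) :
    ({E : Matrix (Fin L) (Fin N) F |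
        {i : Fin N | (fun l => E l i) ≠ 0}.ncard = t ∧
        ∃ D' : Matrix (Fin L) (Fin N) F,
          (∀ l, ∃ p : F[X], p.degree < (K : ℕ) ∧ ∀ i, D' l i = p.eval (α i)) ∧
          D' ≠ D ∧
          {i : Fin N | (fun l => (D + E) l i) ≠ (fun l => D' l i)}.ncard ≤ t}.ncard)
      * (Fintype.card F) ^ L
      ≤ 4 ^ N * (Fintype.card F) ^ (L * t) := by
  classical
  set q := Fintype.card F with hq
  -- the covering family
  set f : Finset (Fin N) × Finset (Fin N) → Set (Matrix (Fin L) (Fin N) F) :=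
    fun ST => {E | ST.1.card = t ∧ ST.2.card ≤ t ∧ (∀ i ∉ ST.1, ∀ l, E l i = 0) ∧
      ∃ C : Matrix (Fin L) (Fin N) F,
        (∀ l, ∃ p : F[X], p.degree < (K : ℕ) ∧ ∀ i, C l i = p.eval (α i)) ∧
        C ≠ 0 ∧ (∀ i ∉ ST.1 ∪ ST.2, ∀ l, C l i = 0) ∧
        (∀ i ∉ ST.2, ∀ l, E l i = C l i)} with hf
  have hcover : {E : Matrix (Fin L) (Fin N) F |
        {i : Fin N | (fun l => E l i) ≠ 0}.ncard = t ∧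
        ∃ D' : Matrix (Fin L) (Fin N) F,
          (∀ l, ∃ p : F[X], p.degree < (K : ℕ) ∧ ∀ i, D' l i = p.eval (α i)) ∧
          D' ≠ D ∧
          {i : Fin N | (fun l => (D + E) l i) ≠ (fun l => D' l i)}.ncard ≤ t}
      ⊆ ⋃ ST ∈ (Finset.univ : Finset (Finset (Fin N) × Finset (Fin N))), f ST := by
    rintro E ⟨hsupp, D', hD', hne, hdist⟩
    set C : Matrix (Fin L) (Fin N) F := D' - D with hC
    set S : Finset (Fin N) := Finset.univ.filter (fun i => (fun l => E l i) ≠ 0) with hS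
    set T : Finset (Fin N) := Finset.univ.filter
      (fun i => (fun l => E l i) ≠ (fun l => C l i)) with hT
    have hncardS : ∀ (P : Fin N → Prop) [DecidablePred P],
        {i : Fin N | P i}.ncard = (Finset.univ.filter P).card := by
      intro P _
      rw [Set.ncard_eq_toFinset_card', Set.toFinset_setOf]
    have hScard : S.card = t := by rw [hS, ← hncardS]; exact hsupp
    have hTcard : T.card ≤ t := by
      have hsets : {i : Fin N | (fun l => (D + E) l i) ≠ (fun l => D' l i)}
          = {i : Fin N | (fun l => E l i) ≠ (fun l => C l i)} := by
        ext i
        simp only [Set.mem_setOf_eq, ne_eq, funext_iff, not_iff_not]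
        apply forall_congr'
        intro l
        rw [hC]
        simp [Matrix.add_apply, Matrix.sub_apply, eq_sub_iff_add_eq, add_comm]
      rw [hT, ← hncardS, ← hsets]
      exact hdist
    apply Set.mem_biUnion (Finset.mem_univ (S, T))
    refine ⟨hScard, hTcard, ?_, C, ?_, ?_, ?_, ?_⟩
    · intro i hi l
      have : ¬ ((fun l => E l i) ≠ 0) := by
        intro hcon
        exact hi (Finset.mem_filter.mpr ⟨Finset.mem_univ i, hcon⟩)
      simpa using congrFun (not_not.mp this) l
    · intro l
      obtain ⟨p', hp', he'⟩ := hD' l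
      obtain ⟨pd, hpd, hed⟩ := hD l
      refine ⟨p' - pd, lt_of_le_of_lt (degree_sub_le _ _) (max_lt hp' hpd), fun i => ?_⟩
      rw [hC, Matrix.sub_apply, he', hed, eval_sub]
    · rw [hC]; exact sub_ne_zero.mpr hne
    · intro i hi l
      have hiS : i ∉ S := fun h => hi (Finset.mem_union_left _ h)
      have hiT : i ∉ T := fun h => hi (Finset.mem_union_right _ h)
      have hE0 : E l i = 0 := by
        have : ¬ ((fun l => E l i) ≠ 0) := fun hcon =>
          hiS (Finset.mem_filter.mpr ⟨Finset.mem_univ i, hcon⟩)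
        simpa using congrFun (not_not.mp this) l
      have hEC : E l i = C l i := by
        have : ¬ ((fun l => E l i) ≠ (fun l => C l i)) := fun hcon =>
          hiT (Finset.mem_filter.mpr ⟨Finset.mem_univ i, hcon⟩)
        exact congrFun (not_not.mp this) l
      rw [← hEC, hE0]
    · intro i hi l
      have : ¬ ((fun l => E l i) ≠ (fun l => C l i)) := fun hcon =>
        hi (Finset.mem_filter.mpr ⟨Finset.mem_univ i, hcon⟩)
      exact congrFun (not_not.mp this) l
  have hone : 1 ≤ q := Fintype.card_pos
  have hperpair : ∀ ST : Finset (Fin N) × Finset (Fin N),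
      (f ST).ncard * q ^ L ≤ q ^ (L * t) := by
    intro ST
    by_cases hne : (f ST).Nonempty
    · obtain ⟨E₀, hE₀⟩ := hne
      obtain ⟨hS₀, hT₀, hEsupp₀, C₀, hC₀cw, hC₀ne, hC₀supp, hEC₀⟩ := hE₀
      have hu : N - K < (ST.1 ∪ ST.2).card := by
        by_contra hcon
        push_neg at hcon
        exact hC₀ne (my_cw_eq_zero hα (le_of_lt hKN) _ C₀ hC₀cw hC₀supp hcon)
      set g : Matrix (Fin L) (Fin N) F →
          Matrix (Fin L) (Fin N) F × (Fin L → ((ST.1 ∩ ST.2 : Finset (Fin N)) : Type) → F) :=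
        fun E => (if h : ∃ C : Matrix (Fin L) (Fin N) F,
            (∀ l, ∃ p : F[X], p.degree < (K : ℕ) ∧ ∀ i, C l i = p.eval (α i)) ∧
            C ≠ 0 ∧ (∀ i ∉ ST.1 ∪ ST.2, ∀ l, C l i = 0) ∧
            (∀ i ∉ ST.2, ∀ l, E l i = C l i) then Classical.choose h else 0,
          fun l w => E l w) with hg
      set cs : Set (Matrix (Fin L) (Fin N) F) :=
        {C : Matrix (Fin L) (Fin N) F |
          (∀ l, ∃ p : F[X], p.degree < (K : ℕ) ∧ ∀ i, C l i = p.eval (α i)) ∧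
          ∀ i ∉ ST.1 ∪ ST.2, ∀ l, C l i = 0} with hcs
      have hmaps : ∀ E ∈ f ST, g E ∈ cs ×ˢ (Set.univ : Set (Fin L → ((ST.1 ∩ ST.2 : Finset (Fin N)) : Type) → F)) := by
        rintro E ⟨-, -, -, hex⟩
        refine Set.mem_prod.mpr ⟨?_, Set.mem_univ _⟩
        simp only [hg, dif_pos hex]
        obtain ⟨hcw, -, hsupp, -⟩ := Classical.choose_spec hex
        exact ⟨hcw, hsupp⟩
      have hinj : Set.InjOn g (f ST) := by
        rintro E1 ⟨-, -, hs1, hex1⟩ E2 ⟨-, -, hs2, hex2⟩ heq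
        have hfst := congrArg Prod.fst heq
        have hsnd := congrArg Prod.snd heq
        simp only [hg, dif_pos hex1, dif_pos hex2] at hfst hsnd
        obtain ⟨-, -, -, hEC1⟩ := Classical.choose_spec hex1
        obtain ⟨-, -, -, hEC2⟩ := Classical.choose_spec hex2
        ext l i
        by_cases hiT : i ∈ ST.2
        · by_cases hiS : i ∈ ST.1
          · exact congrFun (congrFun hsnd l) ⟨i, Finset.mem_inter.mpr ⟨hiS, hiT⟩⟩
          · rw [hs1 i hiS l, hs2 i hiS l]
        · rw [hEC1 i hiT l, hEC2 i hiT l, hfst]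
      have hcard2 : Fintype.card (Fin L → ((ST.1 ∩ ST.2 : Finset (Fin N)) : Type) → F)
          = q ^ (L * (ST.1 ∩ ST.2).card) := by
        rw [Fintype.card_fun, Fintype.card_fun, Fintype.card_coe, Fintype.card_fin,
          ← pow_mul, mul_comm]
      have h1 : (f ST).ncard ≤ q ^ (L * ((ST.1 ∪ ST.2).card - (N - K)))
          * q ^ (L * (ST.1 ∩ ST.2).card) := by
        calc (f ST).ncard
            ≤ (cs ×ˢ (Set.univ : Set (Fin L → ((ST.1 ∩ ST.2 : Finset (Fin N)) : Type) → F))).ncard :=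
              Set.ncard_le_ncard_of_injOn g hmaps hinj (Set.toFinite _)
          _ = cs.ncard * Fintype.card (Fin L → ((ST.1 ∩ ST.2 : Finset (Fin N)) : Type) → F) :=
              my_ncard_prod_univ cs
          _ ≤ _ := by
              rw [hcard2]
              exact Nat.mul_le_mul_right _ (my_cs_count hα (le_of_lt hKN) (ST.1 ∪ ST.2))
      have hexp : L * ((ST.1 ∪ ST.2).card - (N - K)) + L * (ST.1 ∩ ST.2).card + L ≤ L * t := by
        have huni := Finset.card_union_add_card_inter ST.1 ST.2
        have hsmall : (ST.1 ∪ ST.2).card - (N - K) + (ST.1 ∩ ST.2).card + 1 ≤ t := by omega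
        calc L * ((ST.1 ∪ ST.2).card - (N - K)) + L * (ST.1 ∩ ST.2).card + L
            = L * ((ST.1 ∪ ST.2).card - (N - K) + (ST.1 ∩ ST.2).card + 1) := by ring
          _ ≤ L * t := Nat.mul_le_mul_left _ hsmall
      calc (f ST).ncard * q ^ L
          ≤ (q ^ (L * ((ST.1 ∪ ST.2).card - (N - K))) * q ^ (L * (ST.1 ∩ ST.2).card)) * q ^ L :=
            Nat.mul_le_mul_right _ h1
        _ = q ^ (L * ((ST.1 ∪ ST.2).card - (N - K)) + L * (ST.1 ∩ ST.2).card + L) := by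
            rw [← pow_add, ← pow_add]
        _ ≤ q ^ (L * t) := Nat.pow_le_pow_right hone hexp
    · rw [Set.not_nonempty_iff_eq_empty.mp hne]
      simp
  calc ({E : Matrix (Fin L) (Fin N) F |
        {i : Fin N | (fun l => E l i) ≠ 0}.ncard = t ∧
        ∃ D' : Matrix (Fin L) (Fin N) F,
          (∀ l, ∃ p : F[X], p.degree < (K : ℕ) ∧ ∀ i, D' l i = p.eval (α i)) ∧
          D' ≠ D ∧
          {i : Fin N | (fun l => (D + E) l i) ≠ (fun l => D' l i)}.ncard ≤ t}.ncard) * q ^ L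
      ≤ (∑ ST ∈ (Finset.univ : Finset (Finset (Fin N) × Finset (Fin N))), (f ST).ncard) * q ^ L :=
        Nat.mul_le_mul_right _ (my_ncard_cover _ _ _ hcover)
    _ = ∑ ST ∈ (Finset.univ : Finset (Finset (Fin N) × Finset (Fin N))), (f ST).ncard * q ^ L :=
        Finset.sum_mul _ _ _
    _ ≤ ∑ _ST ∈ (Finset.univ : Finset (Finset (Fin N) × Finset (Fin N))), q ^ (L * t) :=
        Finset.sum_le_sum fun ST _ => hperpair ST
    _ = 4 ^ N * q ^ (L * t) := by
        rw [Finset.sum_const, smul_eq_mul, Finset.card_univ, Fintype.card_prod,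
          Fintype.card_finset, Fintype.card_fin, ← mul_pow]
        norm_num

lemma my_denom {F : Type} [Field F] [Fintype F] {N L t : ℕ} (htN : t ≤ N) :
    ((Fintype.card F) ^ L - 1) ^ t ≤
      {E : Matrix (Fin L) (Fin N) F |
        {i : Fin N | (fun l => E l i) ≠ 0}.ncard = t}.ncard := by
  classical
  obtain ⟨S₀, -, hS₀⟩ := Finset.exists_subset_card_eq (s := (Finset.univ : Finset (Fin N)))
    (by simpa using htN)
  set ψ : (↥S₀ → {v : Fin L → F // v ≠ 0}) → Matrix (Fin L) (Fin N) F :=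
    fun f l i => if h : i ∈ S₀ then (f ⟨i, h⟩).1 l else 0 with hψ
  have hmaps : ∀ f, ψ f ∈ {E : Matrix (Fin L) (Fin N) F |
      {i : Fin N | (fun l => E l i) ≠ 0}.ncard = t} := by
    intro f
    have : {i : Fin N | (fun l => ψ f l i) ≠ 0} = (S₀ : Set (Fin N)) := by
      ext i
      simp only [Set.mem_setOf_eq, Finset.coe_sort_coe, Finset.mem_coe]
      constructor
      · intro h
        by_contra hiS
        apply h
        funext l
        simp [hψ, dif_neg hiS]
      · intro hiS hcon
        apply (f ⟨i, hiS⟩).2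
        funext l
        have := congrFun hcon l
        simpa [hψ, dif_pos hiS] using this
    show {i : Fin N | (fun l => ψ f l i) ≠ 0}.ncard = t
    rw [this, Set.ncard_coe_finset, hS₀]
  have hinj : Set.InjOn ψ Set.univ := by
    rintro f1 - f2 - heq
    funext w
    apply Subtype.ext
    funext l
    have h1 : (f1 w).1 l = ψ f1 l w := by simp [hψ, dif_pos w.2]
    have h2 : (f2 w).1 l = ψ f2 l w := by simp [hψ, dif_pos w.2]
    rw [h1, h2, heq]
  calc ((Fintype.card F) ^ L - 1) ^ t
      = Fintype.card (↥S₀ → {v : Fin L → F // v ≠ 0}) := by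
        rw [Fintype.card_fun, Fintype.card_coe, hS₀]
        congr 1
        rw [Fintype.card_subtype_compl, Fintype.card_subtype_eq,
          Fintype.card_fun, Fintype.card_fin]
    _ = (Set.univ : Set (↥S₀ → {v : Fin L → F // v ≠ 0})).ncard := by
        rw [Set.ncard_univ, Nat.card_eq_fintype_card]
    _ ≤ _ := Set.ncard_le_ncard_of_injOn ψ (fun f _ => hmaps f) hinj (Set.toFinite _)

/-- For the IRS code under the uniform random error model with t ≤ N-K-1 error columns,
the probability of undetected error of any ML-certificate decoder (upper bounded by the
fraction of bad error matrices) tends to 0 as q^L → ∞. -/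
theorem IRS_undetected_error_vanishes (N K L t : ℕ) (hL : 1 ≤ L) (hKN : K < N)
    (ht : t ≤ N - K - 1) :
    ∀ ε : ℝ, 0 < ε → ∃ Q : ℕ,
      ∀ (Fq : Type) [Field Fq] [Fintype Fq],
      ∀ α : Fin N → Fq, Function.Injective α →
      Q ≤ Fintype.card Fq ^ L →
      ∀ D : Matrix (Fin L) (Fin N) Fq,
        (∀ l, ∃ p : Fq[X], p.degree < (K : ℕ) ∧ ∀ i, D l i = p.eval (α i)) →
        (({E : Matrix (Fin L) (Fin N) Fq |
            {i : Fin N | (fun l => E l i) ≠ 0}.ncard = t ∧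
            ∃ D' : Matrix (Fin L) (Fin N) Fq,
              (∀ l, ∃ p : Fq[X], p.degree < (K : ℕ) ∧ ∀ i, D' l i = p.eval (α i)) ∧
              D' ≠ D ∧
              {i : Fin N | (fun l => (D + E) l i) ≠ (fun l => D' l i)}.ncard ≤ t}.ncard : ℝ) /
          ({E : Matrix (Fin L) (Fin N) Fq |
            {i : Fin N | (fun l => E l i) ≠ 0}.ncard = t}.ncard : ℝ)) ≤ ε := by
  intro ε hε
  refine ⟨max 2 ⌈(8 : ℝ) ^ N / ε⌉₊, ?_⟩
  intro Fq _ _ α hα hQ D hD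
  set q := Fintype.card Fq with hq
  set M := q ^ L with hM
  have hM2 : 2 ≤ M := le_trans (le_max_left _ _) hQ
  set numer := {E : Matrix (Fin L) (Fin N) Fq |
      {i : Fin N | (fun l => E l i) ≠ 0}.ncard = t ∧
      ∃ D' : Matrix (Fin L) (Fin N) Fq,
        (∀ l, ∃ p : Fq[X], p.degree < (K : ℕ) ∧ ∀ i, D' l i = p.eval (α i)) ∧
        D' ≠ D ∧
        {i : Fin N | (fun l => (D + E) l i) ≠ (fun l => D' l i)}.ncard ≤ t}.ncard with hnumer
  set denom := {E : Matrix (Fin L) (Fin N) Fq |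
      {i : Fin N | (fun l => E l i) ≠ 0}.ncard = t}.ncard with hdenom
  have hnum : numer * M ≤ 4 ^ N * M ^ t := by
    have := my_bad_count hKN ht hα D hD
    rw [hM, ← pow_mul]
    exact this
  have htN : t ≤ N := ht.trans ((Nat.sub_le _ _).trans (Nat.sub_le _ _))
  have hden : (M - 1) ^ t ≤ denom := my_denom htN
  have hm2 : (2 : ℝ) ≤ (M : ℝ) := by exact_mod_cast hM2
  have hm0 : (0 : ℝ) < (M : ℝ) := by linarith
  have h3 : (8 : ℝ) ^ N ≤ ε * M := by
    have hceil : (⌈(8 : ℝ) ^ N / ε⌉₊ : ℕ) ≤ M := le_trans (le_max_right _ _) hQ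
    have hdm : (8 : ℝ) ^ N / ε ≤ (M : ℝ) :=
      le_trans (Nat.le_ceil _) (Nat.cast_le.mpr hceil)
    calc (8 : ℝ) ^ N = ((8 : ℝ) ^ N / ε) * ε := by field_simp
      _ ≤ (M : ℝ) * ε := by gcongr
      _ = ε * M := mul_comm _ _
  have hcast : (((M - 1) ^ t : ℕ) : ℝ) = ((M : ℝ) - 1) ^ t := by
    rw [Nat.cast_pow, Nat.cast_sub (le_trans one_le_two hM2), Nat.cast_one]
  have h2 : ((M : ℝ) / 2) ^ t ≤ (denom : ℝ) := by
    calc ((M : ℝ) / 2) ^ t ≤ ((M : ℝ) - 1) ^ t := by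
          apply pow_le_pow_left₀ (by linarith)
          linarith
      _ = (((M - 1) ^ t : ℕ) : ℝ) := hcast.symm
      _ ≤ (denom : ℝ) := Nat.cast_le.mpr hden
  have h1t : (1 : ℝ) ≤ ((M : ℝ) / 2) ^ t := one_le_pow₀ (by linarith)
  have hdenpos : (0 : ℝ) < (denom : ℝ) := by linarith
  have hnumR : (numer : ℝ) ≤ 4 ^ N * (M : ℝ) ^ t / M := by
    rw [le_div_iff₀ hm0]
    calc (numer : ℝ) * M = ((numer * M : ℕ) : ℝ) := by push_cast; ring
      _ ≤ ((4 ^ N * M ^ t : ℕ) : ℝ) := Nat.cast_le.mpr hnum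
      _ = 4 ^ N * (M : ℝ) ^ t := by push_cast; ring
  rw [div_le_iff₀ hdenpos]
  have h2t : (0 : ℝ) < 2 ^ t := by positivity
  have h8 : (4 : ℝ) ^ N * 2 ^ t ≤ ε * M := by
    calc (4 : ℝ) ^ N * 2 ^ t ≤ 4 ^ N * 2 ^ N := by
          have := pow_le_pow_right₀ (by norm_num : (1:ℝ) ≤ 2) htN
          nlinarith [pow_pos (by norm_num : (0:ℝ) < 4) N]
      _ = 8 ^ N := by rw [← mul_pow]; norm_num
      _ ≤ ε * M := h3
  calc (numer : ℝ) ≤ 4 ^ N * (M : ℝ) ^ t / M := hnumR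
    _ ≤ ε * ((M : ℝ) / 2) ^ t := by
        rw [div_le_iff₀ hm0, div_pow]
        have hMt : (0 : ℝ) ≤ (M : ℝ) ^ t := by positivity
        calc (4 : ℝ) ^ N * (M : ℝ) ^ t
            = (4 ^ N * 2 ^ t) * (M : ℝ) ^ t / 2 ^ t := by field_simp
          _ ≤ (ε * M) * (M : ℝ) ^ t / 2 ^ t := by gcongr
          _ = ε * ((M : ℝ) ^ t / 2 ^ t) * M := by ring
    _ ≤ ε * denom := by gcongr
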